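/- Let q ≥ 2 be a power of a prime. The set {ζ + ζ⁻¹ : ζ ∈ ℂ, ζ^{q-1} = 1} ∪ {ζ + ζ⁻¹ : ζ ∈ ℂ, ζ^{q+1} = 1} ⊆ ℂ has exactly q elements. -/

import Mathlib

open Real


noncomputable def g (m k : ℕ) : ℂ := ((2 * Real.cos (2*π*k/m) : ℝ) : ℂ)

lemma exp_add_inv (θ : ℝ) :
    Complex.exp (θ * Complex.I) + (Complex.exp (θ * Complex.I))⁻¹
      = ((2 * Real.cos θ : ℝ) : ℂ) := by
  rw [← Complex.exp_neg, ← neg_mul, Complex.exp_mul_I, Complex.exp_mul_I,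
    ← Complex.ofReal_neg, ← Complex.ofReal_cos, ← Complex.ofReal_cos,
    ← Complex.ofReal_sin, ← Complex.ofReal_sin, Real.cos_neg, Real.sin_neg]
  push_cast
  ring

lemma setEq (m : ℕ) (hm : 0 < m) :
    {x : ℂ | ∃ ζ : ℂ, ζ ^ m = 1 ∧ x = ζ + ζ⁻¹}
      = ↑((Finset.range (m/2+1)).image (g m)) := by
  have hm' : (m:ℝ) ≠ 0 := Nat.cast_ne_zero.mpr hm.ne'
  ext x
  simp only [Set.mem_setOf_eq, Finset.coe_image, Set.mem_image, Finset.mem_coe,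
    Finset.mem_range]
  constructor
  · rintro ⟨ζ, hζ, rfl⟩
    haveI : NeZero m := ⟨hm.ne'⟩
    obtain ⟨k, hk, rfl⟩ := (Complex.isPrimitiveRoot_exp m hm.ne').eq_pow_of_pow_eq_one hζ
    have hpow : Complex.exp (2 * ↑π * Complex.I / ↑m) ^ k
        = Complex.exp (((2*π*k/m : ℝ) : ℂ) * Complex.I) := by
      rw [← Complex.exp_nat_mul]
      congr 1
      push_cast
      ring
    rw [hpow, exp_add_inv]
    rcases le_or_gt (2*k) m with h2k | h2k
    · exact ⟨k, by omega, rfl⟩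
    · refine ⟨m - k, by omega, ?_⟩
      unfold g
      congr 2
      have : (2*π*(m-k:ℕ)/m : ℝ) = 2*π - 2*π*k/m := by
        have : ((m - k : ℕ) : ℝ) = (m : ℝ) - k := by
          push_cast [Nat.cast_sub hk.le]; ring
        rw [this]; field_simp
      rw [this, Real.cos_two_pi_sub]
  · rintro ⟨k, hk, rfl⟩
    refine ⟨Complex.exp (((2*π*k/m : ℝ) : ℂ) * Complex.I), ?_, (exp_add_inv _).symm⟩
    rw [← Complex.exp_nat_mul]
    have hmC : (m:ℂ) ≠ 0 := Nat.cast_ne_zero.mpr hm.ne'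
    have : (m : ℂ) * (((2*π*k/m : ℝ) : ℂ) * Complex.I) = k * (2*π*Complex.I) := by
      push_cast
      field_simp
    rw [this]
    simpa using Complex.exp_int_mul_two_pi_mul_I k

lemma g_injOn (m : ℕ) (hm : 0 < m) :
    Set.InjOn (g m) ↑(Finset.range (m/2+1)) := by
  intro k hk l hl h
  unfold g at h
  simp only [Finset.coe_range, Set.mem_Iio] at hk hl
  have hπ := Real.pi_pos
  have hmR : (0:ℝ) < m := Nat.cast_pos.mpr hm
  have hcos : Real.cos (2*π*k/m) = Real.cos (2*π*l/m) := by
    have := Complex.ofReal_injective (by exact_mod_cast h)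
    linarith
  have bound : ∀ j : ℕ, j < m/2+1 → (2*π*j/m) ∈ Set.Icc (0:ℝ) π := by
    intro j hj
    have h2j : 2*j ≤ m := by omega
    constructor
    · positivity
    · rw [div_le_iff₀ hmR]
      have : (2*(j:ℝ)) ≤ m := by exact_mod_cast h2j
      nlinarith
  have := Real.injOn_cos (bound k hk) (bound l hl) hcos
  have hkl : (k:ℝ) = l := by
    have h2 : 2*π*k/m = 2*π*l/m := this
    field_simp at h2
    exact_mod_cast h2
  exact_mod_cast hkl

lemma card_set (m : ℕ) (hm : 0 < m) :
    Set.ncard {x : ℂ | ∃ ζ : ℂ, ζ ^ m = 1 ∧ x = ζ + ζ⁻¹} = m/2 + 1 := by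
  rw [setEq m hm, Set.ncard_coe_finset, Finset.card_image_of_injOn (g_injOn m hm),
    Finset.card_range]


lemma inter_eq (q : ℕ) (hq2 : 2 ≤ q) :
    {x : ℂ | ∃ ζ : ℂ, ζ ^ (q - 1) = 1 ∧ x = ζ + ζ⁻¹}
      ∩ {x : ℂ | ∃ ζ : ℂ, ζ ^ (q + 1) = 1 ∧ x = ζ + ζ⁻¹}
      = if Even q then {2} else {(2:ℂ), -2} := by
  ext x
  constructor
  · rintro ⟨⟨ζ, hζ, rfl⟩, ⟨η, hη, hx⟩⟩
    have hζ0 : ζ ≠ 0 := by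
      intro h; rw [h] at hζ; simp [zero_pow (by omega : q - 1 ≠ 0)] at hζ
    have hη0 : η ≠ 0 := by
      intro h; rw [h] at hη; simp [zero_pow (by omega : q + 1 ≠ 0)] at hη
    have key : ζ * (η * ((ζ - η) * (ζ * η - 1))) = 0 := by
      have h1 : ζ * η * (ζ + ζ⁻¹) = ζ * η * (η + η⁻¹) := by rw [hx]
      field_simp at h1
      linear_combination (ζ * η) * h1
    rw [mul_eq_zero, mul_eq_zero] at key
    have key2 : (ζ - η) * (ζ * η - 1) = 0 := by tauto
    have hζq1 : ζ ^ (q + 1) = 1 := by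
      rcases mul_eq_zero.mp key2 with h | h
      · have heq : ζ = η := sub_eq_zero.mp h
        rw [heq]; exact hη
      · have hζη : η = ζ⁻¹ := by
          apply eq_inv_of_mul_eq_one_left
          linear_combination h
        rw [hζη] at hη
        rw [inv_pow, inv_eq_one] at hη
        exact hη
    have hsq : ζ ^ 2 = 1 := by
      have : ζ ^ (q - 1) * ζ ^ 2 = ζ ^ (q + 1) := by
        rw [← pow_add]; congr 1; omega
      rw [hζ, one_mul] at this
      rw [this, hζq1]
    have hcases : ζ = 1 ∨ ζ = -1 := by
      have h12 : (ζ - 1) * (ζ + 1) = 0 := by linear_combination hsq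
      rcases mul_eq_zero.mp h12 with h | h
      · left; linear_combination h
      · right; linear_combination h
    by_cases hev : Even q
    · simp only [hev, if_true, Set.mem_singleton_iff]
      rcases hcases with h | h
      · rw [h]; norm_num
      · exfalso
        rw [h] at hζ
        have : Odd (q - 1) := by
          rcases hev with ⟨c, hc⟩; exact ⟨c - 1, by omega⟩
        rw [this.neg_one_pow] at hζ
        norm_num at hζ
    · simp only [hev, if_false, Set.mem_insert_iff, Set.mem_singleton_iff]
      rcases hcases with h | h
      · left; rw [h]; norm_num
      · right; rw [h]; norm_num
  · intro hx
    by_cases hev : Even q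
    · simp only [hev, if_true, Set.mem_singleton_iff] at hx
      subst hx
      exact ⟨⟨1, one_pow _, by norm_num⟩, ⟨1, one_pow _, by norm_num⟩⟩
    · simp only [hev, if_false, Set.mem_insert_iff, Set.mem_singleton_iff] at hx
      have hqodd : Odd q := Nat.not_even_iff_odd.mp hev
      rcases hx with rfl | rfl
      · exact ⟨⟨1, one_pow _, by norm_num⟩, ⟨1, one_pow _, by norm_num⟩⟩
      · refine ⟨⟨-1, ?_, by norm_num⟩, ⟨-1, ?_, by norm_num⟩⟩
        · have : Even (q - 1) := by rcases hqodd with ⟨c, hc⟩; exact ⟨c, by omega⟩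
          exact this.neg_one_pow
        · have : Even (q + 1) := by rcases hqodd with ⟨c, hc⟩; exact ⟨c + 1, by omega⟩
          exact this.neg_one_pow

/-- for a prime power `q ≥ 2`, the set
`{ζ + ζ⁻¹ : ζ^(q-1) = 1} ∪ {ζ + ζ⁻¹ : ζ^(q+1) = 1} ⊆ ℂ` has exactly `q` elements. -/
theorem stmt_4 (q : ℕ) (hq : IsPrimePow q) :
    ({x : ℂ | ∃ ζ : ℂ, ζ ^ (q - 1) = 1 ∧ x = ζ + ζ⁻¹}
      ∪ {x : ℂ | ∃ ζ : ℂ, ζ ^ (q + 1) = 1 ∧ x = ζ + ζ⁻¹}).ncard = q := by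
  have hq2 : 2 ≤ q := hq.two_le
  set A := {x : ℂ | ∃ ζ : ℂ, ζ ^ (q - 1) = 1 ∧ x = ζ + ζ⁻¹} with hAdef
  set B := {x : ℂ | ∃ ζ : ℂ, ζ ^ (q + 1) = 1 ∧ x = ζ + ζ⁻¹} with hBdef
  have hAfin : A.Finite := by
    rw [hAdef, setEq (q-1) (by omega)]; exact Finset.finite_toSet _
  have hBfin : B.Finite := by
    rw [hBdef, setEq (q+1) (by omega)]; exact Finset.finite_toSet _
  have hA : A.ncard = (q-1)/2 + 1 := card_set (q-1) (by omega)
  have hB : B.ncard = (q+1)/2 + 1 := card_set (q+1) (by omega)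
  have hsum := Set.ncard_union_add_ncard_inter A B hAfin hBfin
  have hI := inter_eq q hq2
  by_cases hev : Even q
  · rw [if_pos hev] at hI
    rw [← hAdef, ← hBdef] at hI
    rw [hI, Set.ncard_singleton] at hsum
    obtain ⟨c, hc⟩ := hev
    omega
  · rw [if_neg hev] at hI
    rw [← hAdef, ← hBdef] at hI
    rw [hI, Set.ncard_pair (by norm_num : (2:ℂ) ≠ -2)] at hsum
    obtain ⟨c, hc⟩ := Nat.not_even_iff_odd.mp hev
    omega
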